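/- Let L be a distributive lattice and let S be a set of lattice homomorphisms from L to 2 such that S contains both constant maps (the constant map 0 and the constant map 1) and S is a closed subset of the product space 2^L (2 discrete). Then S equals the set of all lattice homomorphisms from L to 2 if and only if S separates the points of L, i.e., for all distinct a, b ∈ L there exists φ ∈ S with φ(a) ≠ φ(b). -/

import Mathlib

/-- A map between lattices preserving binary joins and meets (no bound constants
in the language). -/
def IsLatHom {α β : Type*} [Lattice α] [Lattice β] (f : α → β) : Prop :=
  (∀ a b, f (a ⊔ b) = f a ⊔ f b) ∧ (∀ a b, f (a ⊓ b) = f a ⊓ f b)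

open Order

lemma IsLatHom.mono {α β : Type*} [Lattice α] [Lattice β] {f : α → β}
    (hf : IsLatHom f) : Monotone f := by
  intro a b hab
  have : f (a ⊔ b) = f a ⊔ f b := hf.1 a b
  rw [sup_eq_right.2 hab] at this
  exact le_sup_left.trans this.ge

/-- Prime-ideal separation: in any distributive lattice, if `¬ b ≤ a` then there is a
lattice homomorphism to `Bool` sending `a` to `false` and `b` to `true`. -/
lemma exists_hom_sep {L : Type*} [DistribLattice L] {a b : L} (h : ¬ b ≤ a) :
    ∃ f : L → Bool, IsLatHom f ∧ f a = false ∧ f b = true := by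
  classical
  -- embed into a bounded distributive lattice
  let e : L → WithBot (WithTop L) := fun x => ((x : WithTop L) : WithBot (WithTop L))
  have he_le : ∀ x y : L, e x ≤ e y ↔ x ≤ y := by
    intro x y
    simp [e]
  have he_sup : ∀ x y : L, e (x ⊔ y) = e x ⊔ e y := by
    intro x y; simp only [e, WithTop.coe_sup, WithBot.coe_sup]
  have he_inf : ∀ x y : L, e (x ⊓ y) = e x ⊓ e y := by
    intro x y; simp only [e, WithTop.coe_inf, WithBot.coe_inf]
  have hdisj : Disjoint ((PFilter.principal (e b) : PFilter (WithBot (WithTop L))) :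
        Set (WithBot (WithTop L)))
      ((Ideal.principal (e a) : Ideal (WithBot (WithTop L))) : Set (WithBot (WithTop L))) := by
    rw [Set.disjoint_left]
    intro x hxF hxI
    have h1 : e b ≤ x := hxF
    have h2 : x ≤ e a := hxI
    exact h ((he_le b a).1 (h1.trans h2))
  obtain ⟨J, hJprime, hIJ, hFJ⟩ :=
    DistribLattice.prime_ideal_of_disjoint_filter_ideal hdisj
  refine ⟨fun x => decide (e x ∉ J), ⟨?_, ?_⟩, ?_, ?_⟩
  · intro x y
    have : e (x ⊔ y) ∈ J ↔ e x ∈ J ∧ e y ∈ J := by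
      rw [he_sup]
      constructor
      · intro hxy
        exact ⟨J.lower le_sup_left hxy, J.lower le_sup_right hxy⟩
      · exact fun ⟨h1, h2⟩ => J.sup_mem h1 h2
    by_cases hx : e x ∈ J <;> by_cases hy : e y ∈ J <;> simp [hx, hy, this]
  · intro x y
    have : e (x ⊓ y) ∈ J ↔ e x ∈ J ∨ e y ∈ J := by
      rw [he_inf]
      constructor
      · exact hJprime.mem_or_mem
      · rintro (h1 | h1)
        · exact J.lower inf_le_left h1
        · exact J.lower inf_le_right h1
    by_cases hx : e x ∈ J <;> by_cases hy : e y ∈ J <;> simp [hx, hy, this]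
  · have : e a ∈ J := hIJ (Ideal.mem_principal_self)
    simp [this]
  · have hb : e b ∉ J := by
      have : e b ∈ (PFilter.principal (e b) : PFilter (WithBot (WithTop L))) :=
        PFilter.mem_principal.2 le_rfl
      exact fun hmem => Set.disjoint_left.1 hFJ this hmem
    simp [hb]

/-- Let `L` be a distributive lattice and `S` a set of lattice
homomorphisms `L → 2` containing both constant maps and closed in the product space
`2^L` (`2 = Bool` discrete).  Then `S` equals the set of all lattice homomorphisms
`L → 2` if and only if `S` separates the points of `L`. -/
theorem closed_separating_set_eq_all_homs (L : Type*) [DistribLattice L]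
    (S : Set (L → Bool))
    (hhom : ∀ f ∈ S, IsLatHom f)
    (h0 : (fun _ : L => false) ∈ S)
    (h1 : (fun _ : L => true) ∈ S)
    (hcl : IsClosed S) :
    S = {f : L → Bool | IsLatHom f} ↔
      ∀ a b : L, a ≠ b → ∃ f ∈ S, f a ≠ f b := by
  classical
  constructor
  · -- all homs separate points
    rintro rfl a b hab
    rcases (not_and_or.1 (fun hle : a ≤ b ∧ b ≤ a => hab (le_antisymm hle.1 hle.2))) with h | h
    · obtain ⟨f, hf, hfa, hfb⟩ := exists_hom_sep h
      exact ⟨f, hf, by simp [hfa, hfb]⟩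
    · obtain ⟨f, hf, hfa, hfb⟩ := exists_hom_sep h
      exact ⟨f, hf, by simp [hfa, hfb]⟩
  · intro hsep
    apply Set.Subset.antisymm
    · exact fun f hf => hhom f hf
    · intro f (hf : IsLatHom f)
      -- finite approximation
      have key : ∀ F : Finset L, ∃ g ∈ S, ∀ x ∈ F, g x = f x := by
        intro F
        set Ff := F.filter (fun x => f x = false) with hFf
        set Ft := F.filter (fun x => f x = true) with hFt
        rcases eq_or_ne Ff ∅ with hFfe | hFfne
        · refine ⟨fun _ => true, h1, fun x hx => ?_⟩
          by_contra hne
          have hfx : f x = false := by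
            cases hfx : f x
            · rfl
            · exact absurd hfx.symm (by simpa using hne)
          have : x ∈ Ff := Finset.mem_filter.2 ⟨hx, hfx⟩
          simp [hFfe] at this
        rcases eq_or_ne Ft ∅ with hFte | hFtne
        · refine ⟨fun _ => false, h0, fun x hx => ?_⟩
          cases hfx : f x
          · rfl
          · have hmem : x ∈ Ft := Finset.mem_filter.2 ⟨hx, hfx⟩
            rw [hFte] at hmem
            simp at hmem
        have hFf' : Ff.Nonempty := Finset.nonempty_of_ne_empty hFfne
        have hFt' : Ft.Nonempty := Finset.nonempty_of_ne_empty hFtne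
        set a := Ff.sup' hFf' id with ha
        set b := Ft.inf' hFt' id with hb
        have hfa : f a = false := by
          have hle : f a ≤ false := by
            rw [ha, Finset.comp_sup'_eq_sup'_comp hFf' f hf.1]
            apply Finset.sup'_le
            intro x hx
            exact ((Finset.mem_filter.1 hx).2).le
          exact le_antisymm hle (Bool.false_le _)
        have hfb : f b = true := by
          have hle : true ≤ f b := by
            rw [hb, Finset.apply_inf'_eq_inf'_comp hFt' f hf.2]
            apply Finset.le_inf'
            intro x hx
            exact ((Finset.mem_filter.1 hx).2).ge
          exact le_antisymm (Bool.le_true _) hle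
        have hnle : ¬ b ≤ a := by
          intro hle
          have := hf.mono hle
          rw [hfa, hfb] at this
          exact absurd this (by decide)
        have hne : a ⊓ b ≠ b := fun hctr => hnle (inf_eq_right.1 hctr)
        obtain ⟨g, hgS, hg⟩ := hsep _ _ hne
        have hg' : g a ⊓ g b ≠ g b := by rwa [← (hhom g hgS).2]
        have hga : g a = false ∧ g b = true := by
          revert hg'
          cases hga : g a <;> cases hgb : g b <;> decide
        refine ⟨g, hgS, fun x hx => ?_⟩
        cases hfx : f x
        · have hxa : x ≤ a := Finset.le_sup' (f := id) (Finset.mem_filter.2 ⟨hx, hfx⟩)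
          have := (hhom g hgS).mono hxa
          rw [hga.1] at this
          exact le_antisymm this (Bool.false_le _)
        · have hbx : b ≤ x := Finset.inf'_le (f := id) (Finset.mem_filter.2 ⟨hx, hfx⟩)
          have := (hhom g hgS).mono hbx
          rw [hga.2] at this
          exact le_antisymm (Bool.le_true _) this
      choose g hgS hgf using key
      have htend : Filter.Tendsto g Filter.atTop (nhds f) := by
        rw [tendsto_pi_nhds]
        intro x
        rw [nhds_discrete, Filter.tendsto_pure]
        refine Filter.eventually_atTop.2 ⟨{x}, fun F hF => ?_⟩
        exact hgf F x (hF (Finset.mem_singleton_self x))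
      exact hcl.mem_of_tendsto htend (Filter.Eventually.of_forall hgS)
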